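/- arXiv:1203.0108 — 4 statements merged into one kernel-verified Lean document; each statement's English description precedes it below -/
import Mathlib

section
/- Let A₀ ∈ ℝ^{m₁×m₂} and let P_{A₀} and P_{A₀}^⊥ be defined by P_{A₀}^⊥(B) = P_{S₁⊥} B P_{S₂⊥} and P_{A₀}(B) = B − P_{A₀}^⊥(B), where S₁, S₂ are the column and row spaces of A₀ (spans of left and right singular vectors) and P_{S⊥} denotes orthogonal projection onto the orthogonal complement. Then for every matrix B, rank(P_{A₀}(B)) ≤ 2·rank(A₀). -/
open Matrix
noncomputable def nuclearNorm {m₁ m₂ : ℕ} (A : Matrix (Fin m₁) (Fin m₂) ℝ) : ℝ :=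
  ∑ i, Real.sqrt ((Matrix.isHermitian_conjTranspose_mul_self A).eigenvalues i)

noncomputable def opNorm {m₁ m₂ : ℕ} (A : Matrix (Fin m₁) (Fin m₂) ℝ) : ℝ :=
  ‖LinearMap.toContinuousLinearMap (Matrix.toEuclideanLin A)‖

noncomputable def frobNorm {m₁ m₂ : ℕ} (A : Matrix (Fin m₁) (Fin m₂) ℝ) : ℝ :=
  Real.sqrt (∑ j, ∑ k, (A j k) ^ 2)

noncomputable def mip {m₁ m₂ : ℕ} (A B : Matrix (Fin m₁) (Fin m₂) ℝ) : ℝ :=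
  (Aᵀ * B).trace

lemma my_rank_add_le {m n : ℕ} (A B : Matrix (Fin m) (Fin n) ℝ) :
    (A + B).rank ≤ A.rank + B.rank := by
  have h : LinearMap.range (A + B).mulVecLin ≤
      LinearMap.range A.mulVecLin ⊔ LinearMap.range B.mulVecLin := by
    rintro _ ⟨x, rfl⟩
    rw [Matrix.mulVecLin_apply, Matrix.add_mulVec]
    exact Submodule.add_mem_sup ⟨x, rfl⟩ ⟨x, rfl⟩
  calc (A + B).rank
      ≤ Module.finrank ℝ ↥(LinearMap.range A.mulVecLin ⊔ LinearMap.range B.mulVecLin) :=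
        Submodule.finrank_mono h
    _ ≤ A.rank + B.rank := by
        have := Submodule.finrank_sup_add_finrank_inf_eq
          (LinearMap.range A.mulVecLin) (LinearMap.range B.mulVecLin)
        unfold Matrix.rank
        omega

/-- P₁, P₂ are the orthogonal projections onto the orthogonal complements of the
column space and row space of A₀ (characterized as symmetric idempotent matrices
whose complementary projections have range equal to those singular subspaces).
Then rank(P_{A₀}(B)) = rank(B - P₁ B P₂) ≤ 2 rank(A₀). -/
theorem rank_proj_le {m₁ m₂ : ℕ} (A₀ B : Matrix (Fin m₁) (Fin m₂) ℝ)
    (P₁ : Matrix (Fin m₁) (Fin m₁) ℝ) (P₂ : Matrix (Fin m₂) (Fin m₂) ℝ)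
    (hP₁s : P₁ᵀ = P₁) (hP₁i : P₁ * P₁ = P₁)
    (hP₁r : LinearMap.range (Matrix.mulVecLin (1 - P₁)) =
      LinearMap.range (Matrix.mulVecLin A₀))
    (hP₂s : P₂ᵀ = P₂) (hP₂i : P₂ * P₂ = P₂)
    (hP₂r : LinearMap.range (Matrix.mulVecLin (1 - P₂)) =
      LinearMap.range (Matrix.mulVecLin A₀ᵀ)) :
    (B - P₁ * B * P₂).rank ≤ 2 * A₀.rank := by
  have h1 : (1 - P₁).rank = A₀.rank := by
    unfold Matrix.rank; rw [hP₁r]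
  have h2 : (1 - P₂).rank = A₀.rank := by
    unfold Matrix.rank; rw [hP₂r]; exact Matrix.rank_transpose A₀
  have hdecomp : B - P₁ * B * P₂ = (1 - P₁) * B + P₁ * (B * (1 - P₂)) := by
    simp only [Matrix.sub_mul, Matrix.mul_sub, Matrix.one_mul, Matrix.mul_one, Matrix.mul_assoc]; abel
  calc (B - P₁ * B * P₂).rank = ((1 - P₁) * B + P₁ * (B * (1 - P₂))).rank := by
        rw [hdecomp]
    _ ≤ ((1 - P₁) * B).rank + (P₁ * (B * (1 - P₂))).rank := my_rank_add_le _ _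
    _ ≤ (1 - P₁).rank + (B * (1 - P₂)).rank :=
        Nat.add_le_add (Matrix.rank_mul_le_left _ _) (Matrix.rank_mul_le_right _ _)
    _ ≤ (1 - P₁).rank + (1 - P₂).rank :=
        Nat.add_le_add_left (Matrix.rank_mul_le_right _ _) _
    _ = 2 * A₀.rank := by rw [h1, h2]; ring
end

section
/- Let A₀, Â ∈ ℝ^{m₁×m₂} and P_{A₀}, P_{A₀}^⊥ as above. Then ‖Â‖₁ ≥ ‖A₀‖₁ + ‖P_{A₀}^⊥(Â − A₀)‖₁ − ‖P_{A₀}(Â − A₀)‖₁, where ‖·‖₁ is the nuclear norm. -/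
open Matrix
open Finset
open scoped RealInnerProductSpace

namespace NNaux

lemma dot_mulVec_left {n₁ n₂ : ℕ} (M : Matrix (Fin n₁) (Fin n₂) ℝ)
    (a : Fin n₂ → ℝ) (b : Fin n₁ → ℝ) :
    (M *ᵥ a) ⬝ᵥ b = a ⬝ᵥ (Mᵀ *ᵥ b) := by
  rw [dotProduct_comm, dotProduct_mulVec, ← mulVec_transpose, dotProduct_comm]

lemma dot_nonneg {n : ℕ} (a : Fin n → ℝ) : 0 ≤ a ⬝ᵥ a :=
  Finset.sum_nonneg fun i _ => mul_self_nonneg _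

lemma sum_dot {ι : Type*} [Fintype ι] {n : ℕ} (f : ι → Fin n → ℝ) (b : Fin n → ℝ) :
    (∑ i, f i) ⬝ᵥ b = ∑ i, f i ⬝ᵥ b := by
  simp [dotProduct, Finset.sum_apply, Finset.sum_mul]
  exact Finset.sum_comm

lemma dot_sum {ι : Type*} [Fintype ι] {n : ℕ} (f : ι → Fin n → ℝ) (b : Fin n → ℝ) :
    b ⬝ᵥ (∑ i, f i) = ∑ i, b ⬝ᵥ f i := by
  rw [dotProduct_comm, sum_dot]
  simp [dotProduct_comm]

lemma bessel_of_orth {ι : Type*} [Fintype ι] {n : ℕ} (u : ι → Fin n → ℝ)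
    (ho : ∀ i j, i ≠ j → u i ⬝ᵥ u j = 0) (hn : ∀ i, u i ⬝ᵥ u i ≤ 1)
    (a : Fin n → ℝ) : ∑ i, (u i ⬝ᵥ a) ^ 2 ≤ a ⬝ᵥ a := by
  set c : ι → ℝ := fun i => u i ⬝ᵥ a with hc
  set s : Fin n → ℝ := ∑ i, c i • u i with hs
  have h1 : a ⬝ᵥ s = ∑ i, c i ^ 2 := by
    rw [hs, dot_sum]
    refine Finset.sum_congr rfl fun i _ => ?_
    rw [dotProduct_smul, smul_eq_mul, dotProduct_comm, sq]
  have h2 : s ⬝ᵥ a = ∑ i, c i ^ 2 := by rw [dotProduct_comm]; exact h1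
  have h3 : s ⬝ᵥ s = ∑ i, c i ^ 2 * (u i ⬝ᵥ u i) := by
    rw [hs, sum_dot]
    refine Finset.sum_congr rfl fun i _ => ?_
    rw [smul_dotProduct, dot_sum, smul_eq_mul]
    rw [Finset.sum_eq_single i]
    · rw [dotProduct_smul, smul_eq_mul]; ring
    · intro j _ hj
      rw [dotProduct_smul, ho i j fun h => hj h.symm, smul_eq_mul, mul_zero]
    · intro h; exact absurd (Finset.mem_univ i) h
  have hd : (0:ℝ) ≤ (a - s) ⬝ᵥ (a - s) := dot_nonneg _
  rw [sub_dotProduct, dotProduct_sub, dotProduct_sub, h1, h2, h3] at hd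
  have h4 : ∑ i, c i ^ 2 * (u i ⬝ᵥ u i) ≤ ∑ i, c i ^ 2 := by
    refine Finset.sum_le_sum fun i _ => ?_
    calc c i ^ 2 * (u i ⬝ᵥ u i) ≤ c i ^ 2 * 1 :=
          mul_le_mul_of_nonneg_left (hn i) (sq_nonneg _)
      _ = c i ^ 2 := mul_one _
  have : ∑ i, c i ^ 2 ≤ a ⬝ᵥ a := by linarith
  calc ∑ i, (u i ⬝ᵥ a) ^ 2 = ∑ i, c i ^ 2 := rfl
    _ ≤ a ⬝ᵥ a := this


structure SVDData {m₁ m₂ : ℕ} (A : Matrix (Fin m₁) (Fin m₂) ℝ) where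
  σ : Fin m₂ → ℝ
  u : Fin m₂ → Fin m₁ → ℝ
  v : Fin m₂ → Fin m₂ → ℝ
  σ_nonneg : ∀ i, 0 ≤ σ i
  sum_σ : ∑ i, σ i = nuclearNorm A
  Av : ∀ i, A *ᵥ v i = σ i • u i
  v_orth : ∀ i j, i ≠ j → v i ⬝ᵥ v j = 0
  v_norm : ∀ i, v i ⬝ᵥ v i = 1
  v_expand : ∀ x : Fin m₂ → ℝ, x = ∑ j, (v j ⬝ᵥ x) • v j
  u_orth : ∀ i j, i ≠ j → u i ⬝ᵥ u j = 0
  u_norm_le : ∀ i, u i ⬝ᵥ u i ≤ 1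
  u_norm_eq : ∀ i, σ i ≠ 0 → u i ⬝ᵥ u i = 1

noncomputable def svdData {m₁ m₂ : ℕ} (A : Matrix (Fin m₁) (Fin m₂) ℝ) : SVDData A := by
  have hG := Matrix.isHermitian_conjTranspose_mul_self A
  set μ := hG.eigenvalues with hμ
  set b := hG.eigenvectorBasis with hb
  have hμ0 : ∀ i, 0 ≤ μ i := fun i => Matrix.eigenvalues_conjTranspose_mul_self_nonneg A i
  set v : Fin m₂ → Fin m₂ → ℝ := fun i => ⇑(b i) with hv
  set σ : Fin m₂ → ℝ := fun i => Real.sqrt (μ i) with hσ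
  have hσ0 : ∀ i, 0 ≤ σ i := fun i => Real.sqrt_nonneg _
  have hσsq : ∀ i, σ i ^ 2 = μ i := fun i => Real.sq_sqrt (hμ0 i)
  have hinner : ∀ (i : Fin m₂) (x : EuclideanSpace ℝ (Fin m₂)), (inner ℝ (b i) x : ℝ) = v i ⬝ᵥ x := by
    intro i x
    simp [PiLp.inner_apply, dotProduct, hv, mul_comm]
  have hvorth : ∀ i j, v i ⬝ᵥ v j = if i = j then 1 else 0 := by
    intro i j
    have h1 := orthonormal_iff_ite.mp b.orthonormal i j
    rw [hinner i (b j)] at h1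
    exact h1
  have hE1 : ∀ i j, (A *ᵥ v i) ⬝ᵥ (A *ᵥ v j) = μ j * (v i ⬝ᵥ v j) := by
    intro i j
    rw [dot_mulVec_left, mulVec_mulVec]
    have ht : Aᵀ * A = Aᴴ * A := by rw [Matrix.conjTranspose_eq_transpose_of_trivial]
    rw [ht]
    have := hG.mulVec_eigenvectorBasis j
    rw [show (Aᴴ * A) *ᵥ v j = μ j • v j from this]
    rw [dotProduct_smul, smul_eq_mul]
  have hAv0 : ∀ i, σ i = 0 → A *ᵥ v i = 0 := by
    intro i h
    have h1 : (A *ᵥ v i) ⬝ᵥ (A *ᵥ v i) = 0 := by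
      rw [hE1, hvorth, if_pos rfl, mul_one, ← hσsq, h]; ring
    exact (dotProduct_self_eq_zero).mp h1
  set u : Fin m₂ → Fin m₁ → ℝ := fun i => if h : σ i = 0 then 0 else (σ i)⁻¹ • (A *ᵥ v i)
    with hu
  have hud : ∀ i, u i = if σ i = 0 then 0 else (σ i)⁻¹ • (A *ᵥ v i) := by
    intro i; rw [hu]; by_cases h : σ i = 0 <;> simp [h]
  refine ⟨σ, u, v, hσ0, rfl, ?_, ?_, ?_, ?_, ?_, ?_, ?_⟩
  · intro i
    by_cases h : σ i = 0
    · rw [hud i, if_pos h, h, zero_smul, hAv0 i h]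
    · rw [hud i, if_neg h, smul_smul, mul_inv_cancel₀ h, one_smul]
  · intro i j hij; rw [hvorth, if_neg hij]
  · intro i; rw [hvorth, if_pos rfl]
  · intro x
    have := (b.sum_repr' (WithLp.toLp 2 x)).symm
    have h2 : ∀ j, (inner ℝ (b j) (WithLp.toLp 2 x) : ℝ) = v j ⬝ᵥ x := fun j => hinner j _
    calc x = ∑ j, (inner ℝ (b j) (WithLp.toLp 2 x) : ℝ) • v j := by
          have h3 := congrArg WithLp.ofLp this
          simpa [hv] using h3
      _ = ∑ j, (v j ⬝ᵥ x) • v j := by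
          refine Finset.sum_congr rfl fun j _ => ?_
          rw [h2]
  · intro i j hij
    by_cases h : σ i = 0
    · rw [hud i, if_pos h, zero_dotProduct]
    by_cases h' : σ j = 0
    · rw [hud i, hud j, if_neg h, if_pos h', dotProduct_zero]
    · rw [hud i, hud j, if_neg h, if_neg h', smul_dotProduct, dotProduct_smul, hE1,
        hvorth, if_neg hij, smul_eq_mul, smul_eq_mul]
      ring
  · intro i
    by_cases h : σ i = 0
    · rw [hud i, if_pos h, zero_dotProduct]; norm_num
    · rw [hud i, if_neg h, smul_dotProduct, dotProduct_smul, hE1, hvorth, if_pos rfl,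
        mul_one, smul_eq_mul, smul_eq_mul, ← hσsq]
      rw [show (σ i)⁻¹ * ((σ i)⁻¹ * σ i ^ 2) = σ i ^ 2 * (σ i)⁻¹ ^ 2 by ring,
        ← mul_pow, mul_inv_cancel₀ h, one_pow]
  · intro i h
    rw [hud i, if_neg h, smul_dotProduct, dotProduct_smul, hE1, hvorth, if_pos rfl,
      mul_one, smul_eq_mul, smul_eq_mul, ← hσsq]
    rw [show (σ i)⁻¹ * ((σ i)⁻¹ * σ i ^ 2) = σ i ^ 2 * (σ i)⁻¹ ^ 2 by ring,
      ← mul_pow, mul_inv_cancel₀ h, one_pow]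


lemma mulVec_sum' {ι : Type*} [Fintype ι] {n₁ n₂ : ℕ} (A : Matrix (Fin n₁) (Fin n₂) ℝ)
    (f : ι → Fin n₂ → ℝ) : A *ᵥ (∑ i, f i) = ∑ i, A *ᵥ f i := by
  have h := map_sum (Matrix.mulVecLin A) f Finset.univ
  rw [Matrix.mulVecLin_apply] at h
  rw [h]
  exact Finset.sum_congr rfl fun i _ => (Matrix.mulVecLin_apply _ _)

lemma svd_value {m₁ m₂ : ℕ} (A : Matrix (Fin m₁) (Fin m₂) ℝ) (d : SVDData A) :
    ∑ i, d.u i ⬝ᵥ (A *ᵥ d.v i) = nuclearNorm A := by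
  rw [← d.sum_σ]
  refine Finset.sum_congr rfl fun i _ => ?_
  rw [d.Av i, dotProduct_smul, smul_eq_mul]
  by_cases h : d.σ i = 0
  · rw [h]; ring
  · rw [d.u_norm_eq i h, mul_one]

lemma sum_dot_le_nuclear {ι : Type*} [Fintype ι] {m₁ m₂ : ℕ}
    (A : Matrix (Fin m₁) (Fin m₂) ℝ) (u : ι → Fin m₁ → ℝ) (v : ι → Fin m₂ → ℝ)
    (hu : ∀ a, ∑ i, (u i ⬝ᵥ a) ^ 2 ≤ a ⬝ᵥ a) (hv : ∀ a, ∑ i, (v i ⬝ᵥ a) ^ 2 ≤ a ⬝ᵥ a) :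
    ∑ i, u i ⬝ᵥ (A *ᵥ v i) ≤ nuclearNorm A := by
  set d := svdData A with hd
  have key : ∀ i, u i ⬝ᵥ (A *ᵥ v i)
      = ∑ j, (d.v j ⬝ᵥ v i) * (d.σ j * (u i ⬝ᵥ d.u j)) := by
    intro i
    calc u i ⬝ᵥ (A *ᵥ v i)
        = u i ⬝ᵥ (A *ᵥ (∑ j, (d.v j ⬝ᵥ v i) • d.v j)) := by rw [← d.v_expand]
      _ = u i ⬝ᵥ (∑ j, (d.v j ⬝ᵥ v i) • (A *ᵥ d.v j)) := by
          rw [show (∑ j, (d.v j ⬝ᵥ v i) • d.v j) = ∑ j, ((d.v j ⬝ᵥ v i) • d.v j) from rfl,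
            mulVec_sum']
          congr 1
          refine Finset.sum_congr rfl fun j _ => ?_
          rw [Matrix.mulVec_smul]
      _ = ∑ j, (d.v j ⬝ᵥ v i) * (d.σ j * (u i ⬝ᵥ d.u j)) := by
          rw [dot_sum]
          refine Finset.sum_congr rfl fun j _ => ?_
          rw [d.Av j, dotProduct_smul, dotProduct_smul, smul_eq_mul, smul_eq_mul]
  calc ∑ i, u i ⬝ᵥ (A *ᵥ v i)
      = ∑ i, ∑ j, (d.v j ⬝ᵥ v i) * (d.σ j * (u i ⬝ᵥ d.u j)) :=
        Finset.sum_congr rfl fun i _ => key i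
    _ ≤ ∑ i, ∑ j, d.σ j * (((u i ⬝ᵥ d.u j) ^ 2 + (v i ⬝ᵥ d.v j) ^ 2) / 2) := by
        refine Finset.sum_le_sum fun i _ => Finset.sum_le_sum fun j _ => ?_
        have h1 : (d.v j ⬝ᵥ v i) * (d.σ j * (u i ⬝ᵥ d.u j))
            = d.σ j * ((u i ⬝ᵥ d.u j) * (v i ⬝ᵥ d.v j)) := by
          rw [dotProduct_comm (d.v j)]; ring
        rw [h1]
        refine mul_le_mul_of_nonneg_left ?_ (d.σ_nonneg j)
        nlinarith [sq_nonneg ((u i ⬝ᵥ d.u j) - (v i ⬝ᵥ d.v j))]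
    _ = ∑ j, (d.σ j / 2) * ((∑ i, (u i ⬝ᵥ d.u j) ^ 2) + ∑ i, (v i ⬝ᵥ d.v j) ^ 2) := by
        rw [Finset.sum_comm]
        refine Finset.sum_congr rfl fun j _ => ?_
        rw [mul_add, Finset.mul_sum, Finset.mul_sum, ← Finset.sum_add_distrib]
        refine Finset.sum_congr rfl fun i _ => ?_
        ring
    _ ≤ ∑ j, (d.σ j / 2) * 2 := by
        refine Finset.sum_le_sum fun j _ => ?_
        refine mul_le_mul_of_nonneg_left ?_ (by linarith [d.σ_nonneg j])
        have b1 : ∑ i, (u i ⬝ᵥ d.u j) ^ 2 ≤ 1 := (hu (d.u j)).trans (d.u_norm_le j)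
        have b2 : ∑ i, (v i ⬝ᵥ d.v j) ^ 2 ≤ 1 := (hv (d.v j)).trans_eq (d.v_norm j)
        linarith
    _ = nuclearNorm A := by
        rw [← d.sum_σ]
        refine Finset.sum_congr rfl fun j _ => ?_
        ring

lemma eq_zero_of_mulVec_zero {a b : ℕ} (M : Matrix (Fin a) (Fin b) ℝ)
    (h : ∀ x, M *ᵥ x = 0) : M = 0 := by
  ext i j
  simpa [Matrix.mulVec_single] using congrFun (h (Pi.single j 1)) i

lemma proj_mul_eq_zero {a b : ℕ} (P : Matrix (Fin a) (Fin a) ℝ)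
    (M : Matrix (Fin a) (Fin b) ℝ) (hPi : P * P = P)
    (hr : LinearMap.range (Matrix.mulVecLin (1 - P)) =
      LinearMap.range (Matrix.mulVecLin M)) :
    P * M = 0 := by
  apply eq_zero_of_mulVec_zero
  intro x
  have hmem : M *ᵥ x ∈ LinearMap.range (Matrix.mulVecLin (1 - P)) := by
    rw [hr]
    exact ⟨x, Matrix.mulVecLin_apply _ _⟩
  obtain ⟨y, hy⟩ := hmem
  rw [Matrix.mulVecLin_apply] at hy
  have h1 : (P * M) *ᵥ x = P *ᵥ (M *ᵥ x) := (Matrix.mulVec_mulVec _ _ _).symm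
  rw [h1, ← hy, Matrix.mulVec_mulVec,
    show P * (1 - P) = 0 by rw [mul_sub, mul_one, hPi, sub_self], Matrix.zero_mulVec]

end NNaux

/-- ‖Â‖₁ ≥ ‖A₀‖₁ + ‖P_{A₀}^⊥(Â − A₀)‖₁ − ‖P_{A₀}(Â − A₀)‖₁, where
P_{A₀}^⊥(B) = P₁ B P₂ and P_{A₀}(B) = B − P₁ B P₂ with P₁, P₂ the orthogonal
projections onto the orthogonal complements of the column/row spaces of A₀. -/
theorem nuclearNorm_decomposition_lower {m₁ m₂ : ℕ}
    (A₀ Ahat : Matrix (Fin m₁) (Fin m₂) ℝ)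
    (P₁ : Matrix (Fin m₁) (Fin m₁) ℝ) (P₂ : Matrix (Fin m₂) (Fin m₂) ℝ)
    (hP₁s : P₁ᵀ = P₁) (hP₁i : P₁ * P₁ = P₁)
    (hP₁r : LinearMap.range (Matrix.mulVecLin (1 - P₁)) =
      LinearMap.range (Matrix.mulVecLin A₀))
    (hP₂s : P₂ᵀ = P₂) (hP₂i : P₂ * P₂ = P₂)
    (hP₂r : LinearMap.range (Matrix.mulVecLin (1 - P₂)) =
      LinearMap.range (Matrix.mulVecLin A₀ᵀ)) :
    nuclearNorm A₀ + nuclearNorm (P₁ * (Ahat - A₀) * P₂)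
        - nuclearNorm ((Ahat - A₀) - P₁ * (Ahat - A₀) * P₂) ≤ nuclearNorm Ahat := by
  classical
  set Δ : Matrix (Fin m₁) (Fin m₂) ℝ := Ahat - A₀ with hΔ
  set D : Matrix (Fin m₁) (Fin m₂) ℝ := P₁ * Δ * P₂ with hD
  set X : Matrix (Fin m₁) (Fin m₂) ℝ := A₀ + D with hX
  set Δ' : Matrix (Fin m₁) (Fin m₂) ℝ := Δ - D with hΔ'
  -- basic orthogonality facts
  have hPA : P₁ * A₀ = 0 := NNaux.proj_mul_eq_zero P₁ A₀ hP₁i hP₁r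
  have hAP : A₀ * P₂ = 0 := by
    have h := NNaux.proj_mul_eq_zero P₂ A₀ᵀ hP₂i hP₂r
    have := congrArg Matrix.transpose h
    rwa [Matrix.transpose_mul, Matrix.transpose_transpose, Matrix.transpose_zero, hP₂s] at this
  set Q : Matrix (Fin m₁) (Fin m₁) ℝ := 1 - P₁ with hQ
  set R : Matrix (Fin m₂) (Fin m₂) ℝ := 1 - P₂ with hR
  have hQs : Qᵀ = Q := by rw [hQ, Matrix.transpose_sub, Matrix.transpose_one, hP₁s]
  have hRs : Rᵀ = R := by rw [hR, Matrix.transpose_sub, Matrix.transpose_one, hP₂s]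
  have hQQ : Q * Q = Q := by
    rw [hQ, sub_mul, one_mul, mul_sub, mul_one, hP₁i]; abel
  have hRR : R * R = R := by
    rw [hR, sub_mul, one_mul, mul_sub, mul_one, hP₂i]; abel
  have hQXR : Q * X * R = A₀ := by
    have h1 : Q * A₀ = A₀ := by rw [hQ, Matrix.sub_mul, Matrix.one_mul, hPA, sub_zero]
    have h2 : Q * D = 0 := by
      rw [hD, hQ, Matrix.sub_mul, Matrix.one_mul, ← Matrix.mul_assoc, ← Matrix.mul_assoc, hP₁i, sub_self]
    have h3 : A₀ * R = A₀ := by rw [hR, Matrix.mul_sub, Matrix.mul_one, hAP, sub_zero]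
    rw [hX, Matrix.mul_add, h1, h2, add_zero, h3]
  have hPXP : P₁ * X * P₂ = D := by
    have h1 : P₁ * D * P₂ = D := by
      rw [hD, ← Matrix.mul_assoc, ← Matrix.mul_assoc, hP₁i, Matrix.mul_assoc (P₁ * Δ),
        hP₂i]
    rw [hX, Matrix.mul_add, Matrix.add_mul, hPA, Matrix.zero_mul, zero_add, h1]
  -- SVD data
  set d := NNaux.svdData X with hd
  set d0 := NNaux.svdData A₀ with hd0
  set d1 := NNaux.svdData D with hd1
  have hdu : ∀ a, ∑ i, (d.u i ⬝ᵥ a) ^ 2 ≤ a ⬝ᵥ a :=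
    NNaux.bessel_of_orth d.u d.u_orth d.u_norm_le
  have hdv : ∀ a, ∑ i, (d.v i ⬝ᵥ a) ^ 2 ≤ a ⬝ᵥ a :=
    NNaux.bessel_of_orth d.v d.v_orth (fun i => le_of_eq (d.v_norm i))
  -- Step 1 : ‖X‖ ≤ ‖Ahat‖ + ‖Δ'‖
  have step1 : nuclearNorm X ≤ nuclearNorm Ahat + nuclearNorm Δ' := by
    have hXA : X = Ahat - Δ' := by rw [hX, hΔ', hΔ, hD]; abel
    have hval := NNaux.svd_value X d
    have hXw : ∀ w, X *ᵥ w = Ahat *ᵥ w - Δ' *ᵥ w := by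
      intro w
      rw [hXA, Matrix.sub_mulVec]
    have hsplit : ∀ i, d.u i ⬝ᵥ (X *ᵥ d.v i)
        = d.u i ⬝ᵥ (Ahat *ᵥ d.v i) + (- d.u i) ⬝ᵥ (Δ' *ᵥ d.v i) := by
      intro i
      rw [neg_dotProduct, hXw (d.v i), dotProduct_sub]
      ring
    have h1 : ∑ i, d.u i ⬝ᵥ (Ahat *ᵥ d.v i) ≤ nuclearNorm Ahat :=
      NNaux.sum_dot_le_nuclear Ahat d.u d.v hdu hdv
    have h2 : ∑ i, (- d.u i) ⬝ᵥ (Δ' *ᵥ d.v i) ≤ nuclearNorm Δ' := by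
      refine NNaux.sum_dot_le_nuclear Δ' (fun i => - d.u i) d.v ?_ hdv
      intro a
      have : ∀ i, ((- d.u i) ⬝ᵥ a) ^ 2 = (d.u i ⬝ᵥ a) ^ 2 := by
        intro i; rw [neg_dotProduct, neg_sq]
      rw [Finset.sum_congr rfl fun i _ => this i]
      exact hdu a
    calc nuclearNorm X = ∑ i, d.u i ⬝ᵥ (X *ᵥ d.v i) := hval.symm
      _ = (∑ i, d.u i ⬝ᵥ (Ahat *ᵥ d.v i)) + ∑ i, (- d.u i) ⬝ᵥ (Δ' *ᵥ d.v i) := by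
          rw [← Finset.sum_add_distrib]
          exact Finset.sum_congr rfl fun i _ => hsplit i
      _ ≤ nuclearNorm Ahat + nuclearNorm Δ' := add_le_add h1 h2
  -- Step 2 : ‖A₀‖ + ‖D‖ ≤ ‖X‖
  have step2 : nuclearNorm A₀ + nuclearNorm D ≤ nuclearNorm X := by
    set U : (Fin m₂ ⊕ Fin m₂) → Fin m₁ → ℝ :=
      Sum.elim (fun i => Q *ᵥ d0.u i) (fun i => P₁ *ᵥ d1.u i) with hU
    set V : (Fin m₂ ⊕ Fin m₂) → Fin m₂ → ℝ :=
      Sum.elim (fun i => R *ᵥ d0.v i) (fun i => P₂ *ᵥ d1.v i) with hV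
    have hbesselU : ∀ a, ∑ k, (U k ⬝ᵥ a) ^ 2 ≤ a ⬝ᵥ a := by
      intro a
      rw [Fintype.sum_sum_type]
      simp only [hU, Sum.elim_inl, Sum.elim_inr]
      have e1 : ∀ i : Fin m₂, ((Q *ᵥ d0.u i) ⬝ᵥ a) ^ 2 = (d0.u i ⬝ᵥ (Q *ᵥ a)) ^ 2 := by
        intro i; rw [NNaux.dot_mulVec_left, hQs]
      have e2 : ∀ i : Fin m₂, ((P₁ *ᵥ d1.u i) ⬝ᵥ a) ^ 2 = (d1.u i ⬝ᵥ (P₁ *ᵥ a)) ^ 2 := by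
        intro i; rw [NNaux.dot_mulVec_left, hP₁s]
      have b1 := NNaux.bessel_of_orth d0.u d0.u_orth d0.u_norm_le (Q *ᵥ a)
      have b2 := NNaux.bessel_of_orth d1.u d1.u_orth d1.u_norm_le (P₁ *ᵥ a)
      have hsum : (Q *ᵥ a) ⬝ᵥ (Q *ᵥ a) + (P₁ *ᵥ a) ⬝ᵥ (P₁ *ᵥ a) = a ⬝ᵥ a := by
        have t1 : (Q *ᵥ a) ⬝ᵥ (Q *ᵥ a) = a ⬝ᵥ (Q *ᵥ a) := by
          rw [NNaux.dot_mulVec_left, hQs, Matrix.mulVec_mulVec, hQQ]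
        have t2 : (P₁ *ᵥ a) ⬝ᵥ (P₁ *ᵥ a) = a ⬝ᵥ (P₁ *ᵥ a) := by
          rw [NNaux.dot_mulVec_left, hP₁s, Matrix.mulVec_mulVec, hP₁i]
        rw [t1, t2, ← dotProduct_add, ← Matrix.add_mulVec,
          show Q + P₁ = 1 by rw [hQ]; abel, Matrix.one_mulVec]
      calc (∑ i, ((Q *ᵥ d0.u i) ⬝ᵥ a) ^ 2) + ∑ i, ((P₁ *ᵥ d1.u i) ⬝ᵥ a) ^ 2
          = (∑ i, (d0.u i ⬝ᵥ (Q *ᵥ a)) ^ 2) + ∑ i, (d1.u i ⬝ᵥ (P₁ *ᵥ a)) ^ 2 := by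
            rw [Finset.sum_congr rfl fun i _ => e1 i, Finset.sum_congr rfl fun i _ => e2 i]
        _ ≤ (Q *ᵥ a) ⬝ᵥ (Q *ᵥ a) + (P₁ *ᵥ a) ⬝ᵥ (P₁ *ᵥ a) := add_le_add b1 b2
        _ = a ⬝ᵥ a := hsum
    have hbesselV : ∀ a, ∑ k, (V k ⬝ᵥ a) ^ 2 ≤ a ⬝ᵥ a := by
      intro a
      rw [Fintype.sum_sum_type]
      simp only [hV, Sum.elim_inl, Sum.elim_inr]
      have e1 : ∀ i : Fin m₂, ((R *ᵥ d0.v i) ⬝ᵥ a) ^ 2 = (d0.v i ⬝ᵥ (R *ᵥ a)) ^ 2 := by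
        intro i; rw [NNaux.dot_mulVec_left, hRs]
      have e2 : ∀ i : Fin m₂, ((P₂ *ᵥ d1.v i) ⬝ᵥ a) ^ 2 = (d1.v i ⬝ᵥ (P₂ *ᵥ a)) ^ 2 := by
        intro i; rw [NNaux.dot_mulVec_left, hP₂s]
      have b1 := NNaux.bessel_of_orth d0.v d0.v_orth (fun i => le_of_eq (d0.v_norm i)) (R *ᵥ a)
      have b2 := NNaux.bessel_of_orth d1.v d1.v_orth (fun i => le_of_eq (d1.v_norm i)) (P₂ *ᵥ a)
      have hsum : (R *ᵥ a) ⬝ᵥ (R *ᵥ a) + (P₂ *ᵥ a) ⬝ᵥ (P₂ *ᵥ a) = a ⬝ᵥ a := by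
        have t1 : (R *ᵥ a) ⬝ᵥ (R *ᵥ a) = a ⬝ᵥ (R *ᵥ a) := by
          rw [NNaux.dot_mulVec_left, hRs, Matrix.mulVec_mulVec, hRR]
        have t2 : (P₂ *ᵥ a) ⬝ᵥ (P₂ *ᵥ a) = a ⬝ᵥ (P₂ *ᵥ a) := by
          rw [NNaux.dot_mulVec_left, hP₂s, Matrix.mulVec_mulVec, hP₂i]
        rw [t1, t2, ← dotProduct_add, ← Matrix.add_mulVec,
          show R + P₂ = 1 by rw [hR]; abel, Matrix.one_mulVec]
      calc (∑ i, ((R *ᵥ d0.v i) ⬝ᵥ a) ^ 2) + ∑ i, ((P₂ *ᵥ d1.v i) ⬝ᵥ a) ^ 2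
          = (∑ i, (d0.v i ⬝ᵥ (R *ᵥ a)) ^ 2) + ∑ i, (d1.v i ⬝ᵥ (P₂ *ᵥ a)) ^ 2 := by
            rw [Finset.sum_congr rfl fun i _ => e1 i, Finset.sum_congr rfl fun i _ => e2 i]
        _ ≤ (R *ᵥ a) ⬝ᵥ (R *ᵥ a) + (P₂ *ᵥ a) ⬝ᵥ (P₂ *ᵥ a) := add_le_add b1 b2
        _ = a ⬝ᵥ a := hsum
    have hval : ∑ k, U k ⬝ᵥ (X *ᵥ V k) = nuclearNorm A₀ + nuclearNorm D := by
      rw [Fintype.sum_sum_type]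
      simp only [hU, hV, Sum.elim_inl, Sum.elim_inr]
      have e1 : ∀ i : Fin m₂, (Q *ᵥ d0.u i) ⬝ᵥ (X *ᵥ (R *ᵥ d0.v i))
          = d0.u i ⬝ᵥ (A₀ *ᵥ d0.v i) := by
        intro i
        rw [NNaux.dot_mulVec_left, hQs, Matrix.mulVec_mulVec, Matrix.mulVec_mulVec, hQXR]
      have e2 : ∀ i : Fin m₂, (P₁ *ᵥ d1.u i) ⬝ᵥ (X *ᵥ (P₂ *ᵥ d1.v i))
          = d1.u i ⬝ᵥ (D *ᵥ d1.v i) := by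
        intro i
        rw [NNaux.dot_mulVec_left, hP₁s, Matrix.mulVec_mulVec, Matrix.mulVec_mulVec, hPXP]
      rw [Finset.sum_congr rfl fun i _ => e1 i, Finset.sum_congr rfl fun i _ => e2 i,
        NNaux.svd_value A₀ d0, NNaux.svd_value D d1]
    calc nuclearNorm A₀ + nuclearNorm D = ∑ k, U k ⬝ᵥ (X *ᵥ V k) := hval.symm
      _ ≤ nuclearNorm X := NNaux.sum_dot_le_nuclear X U V hbesselU hbesselV
  linarith
end

section
/- Let Q : ℝ^{m₁×m₂} → ℝ be defined by Q(A)² = (1/n) Σ_{i=1}^n (Y_i − ⟨X_i, A⟩)², with Y_i = ⟨X_i, A₀⟩ + σξ_i. If := argmin over {‖A‖_∞ ≤ a} of Q(A)² + λ‖A‖₁ (for any minimizer with ‖A₀‖_∞ ≤ a), then (1/n)‖Ω(A₀ − Â)‖₂² + λ‖Â‖₁ ≤ 2‖Σ‖·‖A₀ − Â‖₁ + λ‖A₀‖₁, where Σ = (σ/n)Σ ξ_i X_i, Ω(A)_i = ⟨X_i, A⟩, ‖Σ‖ is the operator norm and ‖·‖₁ the nuclear norm. -/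
open Matrix
open Finset

open scoped RealInnerProductSpace

lemma mip_eq {m₁ m₂ : ℕ} (A B : Matrix (Fin m₁) (Fin m₂) ℝ) :
    mip A B = ∑ k, ∑ j, A j k * B j k := by
  simp [mip, Matrix.trace, Matrix.mul_apply, Matrix.diag]

lemma key_id {m₁ m₂ : ℕ} (S D : Matrix (Fin m₁) (Fin m₂) ℝ)
    (b : OrthonormalBasis (Fin m₂) ℝ (EuclideanSpace ℝ (Fin m₂))) :
    mip S D = ∑ i, ⟪(Matrix.toEuclideanLin S) (b i), (Matrix.toEuclideanLin D) (b i)⟫ := by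
  have horth : ∀ k l, ∑ i, (b i) k * (b i) l = if k = l then (1:ℝ) else 0 := by
    intro k l
    have := b.sum_inner_mul_inner (EuclideanSpace.single k (1:ℝ)) (EuclideanSpace.single l (1:ℝ))
    simp [EuclideanSpace.inner_single_left, EuclideanSpace.inner_single_right,
      EuclideanSpace.single_apply] at this
    rw [this]; simp [eq_comm]
  have hinner : ∀ i, ⟪(Matrix.toEuclideanLin S) (b i), (Matrix.toEuclideanLin D) (b i)⟫
      = ∑ j, (S *ᵥ ⇑(b i)) j * (D *ᵥ ⇑(b i)) j := by
    intro i
    rw [Matrix.toEuclideanLin_apply, Matrix.toEuclideanLin_apply]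
    simp [PiLp.inner_apply, RCLike.inner_apply]
    exact Finset.sum_congr rfl fun _ _ => mul_comm _ _
  rw [mip_eq]
  conv_lhs => rw [Finset.sum_comm]
  simp only [hinner, Matrix.mulVec, dotProduct, WithLp.equiv_apply]
  conv_rhs => rw [Finset.sum_comm]
  refine Finset.sum_congr rfl fun j _ => ?_
  calc ∑ k, S j k * D j k
      = ∑ k, ∑ l, (S j k * D j l) * ∑ i, (b i) k * (b i) l := by
        simp [horth, mul_ite]
    _ = ∑ k, ∑ l, ∑ i, (S j k * D j l) * ((b i) k * (b i) l) := by
        simp [Finset.mul_sum]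
    _ = ∑ k, ∑ i, ∑ l, (S j k * D j l) * ((b i) k * (b i) l) :=
        Finset.sum_congr rfl fun k _ => Finset.sum_comm
    _ = ∑ i, ∑ k, ∑ l, (S j k * D j l) * ((b i) k * (b i) l) := Finset.sum_comm
    _ = ∑ i, (∑ k, S j k * (b i) k) * (∑ l, D j l * (b i) l) := by
        refine Finset.sum_congr rfl fun i _ => ?_
        rw [Finset.sum_mul_sum]
        exact Finset.sum_congr rfl fun k _ => Finset.sum_congr rfl fun l _ => by ring

lemma trace_duality {m₁ m₂ : ℕ} (S D : Matrix (Fin m₁) (Fin m₂) ℝ) :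
    |mip S D| ≤ opNorm S * nuclearNorm D := by
  have hH := Matrix.isHermitian_conjTranspose_mul_self D
  set b := hH.eigenvectorBasis with hb
  have hSop : ∀ i, ‖(Matrix.toEuclideanLin S) (b i)‖ ≤ opNorm S := by
    intro i
    have := (LinearMap.toContinuousLinearMap (Matrix.toEuclideanLin S)).le_opNorm (b i)
    simpa [opNorm, b.orthonormal.1 i] using this
  have hDnorm : ∀ i, ‖(Matrix.toEuclideanLin D) (b i)‖ = Real.sqrt (hH.eigenvalues i) := by
    intro i
    have h1 : ⟪(Matrix.toEuclideanLin D) (b i), (Matrix.toEuclideanLin D) (b i)⟫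
        = hH.eigenvalues i := by
      have hev := hH.mulVec_eigenvectorBasis i
      have hnorm : ⟪b i, b i⟫ = (1:ℝ) := by
        have := b.orthonormal.1 i
        rw [@real_inner_self_eq_norm_sq, this]; norm_num
      rw [Matrix.toEuclideanLin_apply]
      simp only [PiLp.inner_apply, RCLike.inner_apply, starRingEnd_apply, star_trivial,
        WithLp.equiv_apply, WithLp.equiv_symm_apply]
      have : ∑ j, (D *ᵥ (b i).ofLp) j * (D *ᵥ (b i).ofLp) j
          = (D *ᵥ ⇑(b i)) ⬝ᵥ (D *ᵥ ⇑(b i)) := rfl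
      rw [this]
      have h2 : ⇑(b i) ⬝ᵥ ((Dᵀ * D) *ᵥ ⇑(b i)) = (D *ᵥ ⇑(b i)) ⬝ᵥ (D *ᵥ ⇑(b i)) := by
        rw [← Matrix.mulVec_mulVec, Matrix.dotProduct_mulVec, Matrix.vecMul_transpose]
      rw [← h2]
      have hDT : Dᵀ * D = Dᴴ * D := by
        rw [Matrix.conjTranspose_eq_transpose_of_trivial]
      rw [hDT, hev]
      have : ⇑(b i) ⬝ᵥ (hH.eigenvalues i • ⇑(b i)) = hH.eigenvalues i * (⇑(b i) ⬝ᵥ ⇑(b i)) := by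
        rw [dotProduct_smul]; simp [smul_eq_mul]
      rw [this]
      have hbb : ⇑(b i) ⬝ᵥ ⇑(b i) = (1:ℝ) := by
        rw [← hnorm]; simp only [PiLp.inner_apply, RCLike.inner_apply, conj_trivial, dotProduct]
      rw [hbb, mul_one]
    rw [← Real.sqrt_sq (norm_nonneg _)]
    rw [← h1, real_inner_self_eq_norm_sq]
  rw [key_id S D b]
  calc |∑ i, ⟪(Matrix.toEuclideanLin S) (b i), (Matrix.toEuclideanLin D) (b i)⟫|
      ≤ ∑ i, |⟪(Matrix.toEuclideanLin S) (b i), (Matrix.toEuclideanLin D) (b i)⟫| :=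
        Finset.abs_sum_le_sum_abs _ _
    _ ≤ ∑ i, opNorm S * Real.sqrt (hH.eigenvalues i) := by
        refine Finset.sum_le_sum fun i _ => ?_
        calc |⟪(Matrix.toEuclideanLin S) (b i), (Matrix.toEuclideanLin D) (b i)⟫|
            ≤ ‖(Matrix.toEuclideanLin S) (b i)‖ * ‖(Matrix.toEuclideanLin D) (b i)‖ :=
              abs_real_inner_le_norm _ _
          _ ≤ opNorm S * Real.sqrt (hH.eigenvalues i) := by
              rw [← hDnorm i]
              exact mul_le_mul_of_nonneg_right (hSop i) (norm_nonneg _)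
    _ = opNorm S * nuclearNorm D := by
        rw [nuclearNorm, Finset.mul_sum]

lemma mip_sub {m₁ m₂ : ℕ} (X A B : Matrix (Fin m₁) (Fin m₂) ℝ) :
    mip X (A - B) = mip X A - mip X B := by
  simp [mip_eq, Matrix.sub_apply, mul_sub, Finset.sum_sub_distrib]

/-- Basic inequality for the nuclear-norm penalized least squares estimator:
(1/n)‖Ω(A₀ − Â)‖₂² + λ‖Â‖₁ ≤ 2‖Σ‖·‖A₀ − Â‖₁ + λ‖A₀‖₁. -/
theorem basic_inequality {m₁ m₂ n : ℕ} (hn : 0 < n)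
    (X : Fin n → Matrix (Fin m₁) (Fin m₂) ℝ) (ξ : Fin n → ℝ) (σ lam a : ℝ)
    (hσ : 0 < σ) (hlam : 0 < lam)
    (A₀ Ahat : Matrix (Fin m₁) (Fin m₂) ℝ)
    (hA₀ : ∀ j k, |A₀ j k| ≤ a) (hAhat : ∀ j k, |Ahat j k| ≤ a)
    (Y : Fin n → ℝ) (hY : ∀ i, Y i = mip (X i) A₀ + σ * ξ i)
    (hmin : ∀ A : Matrix (Fin m₁) (Fin m₂) ℝ, (∀ j k, |A j k| ≤ a) →
      (1 / n : ℝ) * ∑ i, (Y i - mip (X i) Ahat) ^ 2 + lam * nuclearNorm Ahat ≤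
        (1 / n : ℝ) * ∑ i, (Y i - mip (X i) A) ^ 2 + lam * nuclearNorm A) :
    (1 / n : ℝ) * ∑ i, (mip (X i) (A₀ - Ahat)) ^ 2 + lam * nuclearNorm Ahat ≤
      2 * opNorm ((σ / n) • ∑ i, ξ i • X i) * nuclearNorm (A₀ - Ahat)
        + lam * nuclearNorm A₀ := by
  have hn' : (0:ℝ) < (n:ℝ) := by exact_mod_cast hn
  set Δ := A₀ - Ahat with hΔ
  set S := (σ / n) • ∑ i, ξ i • X i with hS
  set e : Fin n → ℝ := fun i => mip (X i) Δ with he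
  -- residual identities
  have hres : ∀ i, Y i - mip (X i) Ahat = e i + σ * ξ i := by
    intro i
    rw [hY i, he]
    simp only [hΔ, mip_sub]
    ring
  have hres0 : ∀ i, Y i - mip (X i) A₀ = σ * ξ i := by
    intro i; rw [hY i]; ring
  -- linearity: mip S Δ = (σ/n) * ∑ i, ξ i * e i
  have hlin : mip S Δ = (σ / n) * ∑ i, ξ i * e i := by
    simp only [he, mip_eq, hS, Matrix.smul_apply, Matrix.sum_apply, smul_eq_mul]
    calc ∑ k, ∑ j, (σ/(n:ℝ) * ∑ i, ξ i * X i j k) * Δ j k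
        = ∑ k, ∑ j, ∑ i, σ/(n:ℝ) * (ξ i * (X i j k * Δ j k)) := by
          refine Finset.sum_congr rfl fun k _ => Finset.sum_congr rfl fun j _ => ?_
          rw [show (σ/(n:ℝ) * ∑ i, ξ i * X i j k) * Δ j k
              = (∑ i, ξ i * X i j k) * (σ/(n:ℝ) * Δ j k) from by ring,
            Finset.sum_mul]
          exact Finset.sum_congr rfl fun i _ => by ring
      _ = ∑ k, ∑ i, ∑ j, σ/(n:ℝ) * (ξ i * (X i j k * Δ j k)) :=
          Finset.sum_congr rfl fun k _ => Finset.sum_comm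
      _ = ∑ i, ∑ k, ∑ j, σ/(n:ℝ) * (ξ i * (X i j k * Δ j k)) := Finset.sum_comm
      _ = σ/(n:ℝ) * ∑ i, ξ i * ∑ k, ∑ j, X i j k * Δ j k := by
          rw [Finset.mul_sum]
          exact Finset.sum_congr rfl fun i _ => by simp [Finset.mul_sum]
  -- from minimality
  have hkey := hmin A₀ hA₀
  have hsum1 : ∑ i, (Y i - mip (X i) Ahat) ^ 2
      = ∑ i, (e i)^2 + (2*σ) * ∑ i, ξ i * e i + σ^2 * ∑ i, (ξ i)^2 := by
    rw [Finset.mul_sum, Finset.mul_sum, ← Finset.sum_add_distrib, ← Finset.sum_add_distrib]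
    refine Finset.sum_congr rfl fun i _ => ?_
    rw [hres i]; ring
  have hsum2 : ∑ i, (Y i - mip (X i) A₀) ^ 2 = σ^2 * ∑ i, (ξ i)^2 := by
    rw [Finset.mul_sum]
    refine Finset.sum_congr rfl fun i _ => ?_
    rw [hres0 i]; ring
  rw [hsum1, hsum2] at hkey
  -- duality bound
  have hdual : |mip S Δ| ≤ opNorm S * nuclearNorm Δ := trace_duality S Δ
  have h2 : -(2 * mip S Δ) ≤ 2 * opNorm S * nuclearNorm Δ := by
    have : -(mip S Δ) ≤ |mip S Δ| := neg_le_abs _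
    nlinarith [hdual]
  have hfrac : (1/n : ℝ) * ((2*σ) * ∑ i, ξ i * e i) = 2 * mip S Δ := by
    rw [hlin]; field_simp
  have hgoal : (1 / n : ℝ) * ∑ i, e i ^ 2 + lam * nuclearNorm Ahat ≤
      2 * opNorm S * nuclearNorm Δ + lam * nuclearNorm A₀ := by
    nlinarith [hkey, h2, hfrac, hn']
  exact hgoal
end

section
/- Let Z be a nonnegative random variable and suppose there exist ν₁, ν₂ > 0, d ≥ 2 and t* > 0 such that P(Z > t) ≤ d·exp(−t²ν₁) for t ≤ t* and P(Z > t) ≤ d·exp(−tν₂) for t ≥ t*. Then E[Z^{2 log d}]^{1/(2 log d)} ≤ √e · (log(d)·ν₁^{−log d}·Γ(log d) + 2 log(d)·ν₂^{−2 log d}·Γ(2 log d))^{1/(2 log d)}. -/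
open MeasureTheory Real

/-- Integrability of `exp (-b * x ^ p)` on `Ioi 0` for any `0 < p`. -/
lemma integrableOn_exp_neg_mul_rpow' {p b : ℝ} (hp : 0 < p) (hb : 0 < b) :
    MeasureTheory.IntegrableOn (fun x : ℝ => Real.exp (-b * x ^ p)) (Set.Ioi 0) := by
  have hf : MeasureTheory.IntegrableOn
      (fun y : ℝ => y ^ (1 / p - 1) * Real.exp (-b * y ^ (1 : ℝ))) (Set.Ioi 0) :=
    integrableOn_rpow_mul_exp_neg_mul_rpow (by simpa using (one_div_pos.mpr hp)) one_pos hb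
  have := (integrableOn_Ioi_comp_rpow_iff'
      (fun y : ℝ => y ^ (1 / p - 1) * Real.exp (-b * y ^ (1 : ℝ))) hp.ne').mpr hf
  refine this.congr_fun (fun x hx => ?_) measurableSet_Ioi
  have hx0 : (0 : ℝ) < x := hx
  beta_reduce
  rw [smul_eq_mul, Real.rpow_one, ← mul_assoc, ← Real.rpow_mul hx0.le, ← Real.rpow_add hx0]
  have h0 : p - 1 + p * (1 / p - 1) = 0 := by field_simp; ring
  rw [h0, Real.rpow_zero, one_mul]

/-- Value of `∫ x in Ioi 0, exp (-b * x ^ (1/m))` for `0 < m`, `0 < b`. -/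
lemma integral_exp_neg_mul_rpow_inv {m b : ℝ} (hm : 0 < m) (hb : 0 < b) :
    ∫ x in Set.Ioi (0 : ℝ), Real.exp (-b * x ^ (1 / m)) =
      m * b ^ (-m) * Real.Gamma m := by
  rw [integral_exp_neg_mul_rpow (one_div_pos.mpr hm) hb]
  rw [one_div_one_div, Real.Gamma_add_one hm.ne']
  have : (-1 : ℝ) / (1 / m) = -m := by field_simp
  rw [this]; ring

/-- Moment bound from mixed sub-Gaussian/sub-exponential tails: if
P(Z > t) ≤ d·exp(−t²ν₁) for 0 < t ≤ t* and P(Z > t) ≤ d·exp(−tν₂) for t ≥ t*,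
then E[Z^{2 log d}]^{1/(2 log d)} ≤ √e · (log d · ν₁^{−log d} Γ(log d)
+ 2 log d · ν₂^{−2 log d} Γ(2 log d))^{1/(2 log d)}. -/
theorem moment_bound_from_tails {Ω : Type*} [MeasureSpace Ω]
    [IsProbabilityMeasure (volume : Measure Ω)]
    (Z : Ω → ℝ) (hmeas : Measurable Z) (hpos : ∀ ω, 0 ≤ Z ω)
    (ν₁ ν₂ d tstar : ℝ) (hν₁ : 0 < ν₁) (hν₂ : 0 < ν₂) (hd : 2 ≤ d)
    (htstar : 0 < tstar)
    (h1 : ∀ t : ℝ, 0 < t → t ≤ tstar →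
      (volume {ω | t < Z ω}).toReal ≤ d * Real.exp (-t ^ 2 * ν₁))
    (h2 : ∀ t : ℝ, tstar ≤ t →
      (volume {ω | t < Z ω}).toReal ≤ d * Real.exp (-t * ν₂)) :
    (∫ ω, Z ω ^ (2 * Real.log d)) ^ (1 / (2 * Real.log d)) ≤
      Real.sqrt (Real.exp 1) *
        (Real.log d * ν₁ ^ (-Real.log d) * Real.Gamma (Real.log d) +
          2 * Real.log d * ν₂ ^ (-(2 * Real.log d)) * Real.Gamma (2 * Real.log d))
          ^ (1 / (2 * Real.log d)) := by
  set L : ℝ := Real.log d with hLdef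
  have hd0 : (0 : ℝ) < d := by linarith
  have hL : 0 < L := Real.log_pos (by linarith)
  set p : ℝ := 2 * L with hpdef
  have hp : 0 < p := by positivity
  set R : ℝ := L * ν₁ ^ (-L) * Real.Gamma L + 2 * L * ν₂ ^ (-(2 * L)) * Real.Gamma (2 * L)
    with hRdef
  have hR : 0 < R := by
    have h1 := Real.Gamma_pos_of_pos hL
    have h2 := Real.Gamma_pos_of_pos (show (0:ℝ) < 2 * L by positivity)
    have := Real.rpow_pos_of_pos hν₁ (-L)
    have := Real.rpow_pos_of_pos hν₂ (-(2*L))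
    positivity
  -- real-valued tail bound, for all s > 0
  have tail : ∀ s : ℝ, 0 < s →
      (volume {ω | s < Z ω}).toReal ≤ d * Real.exp (-ν₁ * s ^ 2) + d * Real.exp (-ν₂ * s) := by
    intro s hs
    rcases le_total s tstar with h | h
    · have := h1 s hs h
      have h2' : (0:ℝ) ≤ d * Real.exp (-ν₂ * s) := by positivity
      calc (volume {ω | s < Z ω}).toReal ≤ d * Real.exp (-s ^ 2 * ν₁) := this
        _ ≤ d * Real.exp (-ν₁ * s ^ 2) + d * Real.exp (-ν₂ * s) := by
            rw [show -s ^ 2 * ν₁ = -ν₁ * s ^ 2 by ring]; linarith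
    · have := h2 s h
      have h1' : (0:ℝ) ≤ d * Real.exp (-ν₁ * s ^ 2) := by positivity
      calc (volume {ω | s < Z ω}).toReal ≤ d * Real.exp (-s * ν₂) := this
        _ ≤ d * Real.exp (-ν₁ * s ^ 2) + d * Real.exp (-ν₂ * s) := by
            rw [show -s * ν₂ = -ν₂ * s by ring]; linarith
  -- the ENNReal tail bound for the power
  have hsetmeas : ∀ t : ℝ, 0 < t →
      {ω | t < Z ω ^ p} = {ω | t ^ (1/p) < Z ω} := by
    intro t ht
    ext ω
    simp only [Set.mem_setOf_eq, one_div]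
    exact (Real.rpow_inv_lt_iff_of_pos ht.le (hpos ω) hp).symm
  have keybound : ∀ t : ℝ, t ∈ Set.Ioi (0:ℝ) →
      volume {ω | t < Z ω ^ p} ≤
        ENNReal.ofReal (d * Real.exp (-ν₁ * t ^ (1/L))) +
          ENNReal.ofReal (d * Real.exp (-ν₂ * t ^ (1/p))) := by
    intro t ht
    have ht : (0:ℝ) < t := ht
    rw [hsetmeas t ht]
    set s : ℝ := t ^ (1/p) with hsdef
    have hs : 0 < s := Real.rpow_pos_of_pos ht _
    have hb := tail s hs
    have hs2 : s ^ 2 = t ^ (1/L) := by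
      rw [hsdef, ← Real.rpow_natCast (t ^ (1/p)) 2, ← Real.rpow_mul ht.le]
      congr 1
      rw [hpdef]
      field_simp
      norm_num
    rw [hs2] at hb
    calc volume {ω | s < Z ω}
        = ENNReal.ofReal ((volume {ω | s < Z ω}).toReal) := by
          rw [ENNReal.ofReal_toReal (measure_ne_top _ _)]
      _ ≤ ENNReal.ofReal (d * Real.exp (-ν₁ * t ^ (1/L)) + d * Real.exp (-ν₂ * s)) :=
          ENNReal.ofReal_le_ofReal hb
      _ ≤ _ := by
          rw [ENNReal.ofReal_add (by positivity) (by positivity)]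
  -- layer cake
  have hZp_meas : Measurable (fun ω => Z ω ^ p) := by fun_prop
  have layer : ∫⁻ ω, ENNReal.ofReal (Z ω ^ p) =
      ∫⁻ t in Set.Ioi (0:ℝ), volume {ω | t < Z ω ^ p} :=
    lintegral_eq_lintegral_meas_lt volume
      (Filter.Eventually.of_forall fun ω => Real.rpow_nonneg (hpos ω) p)
      hZp_meas.aemeasurable
  -- integrability and values of the two bound integrals
  have hint1 : MeasureTheory.IntegrableOn
      (fun t : ℝ => d * Real.exp (-ν₁ * t ^ (1/L))) (Set.Ioi 0) :=
    (integrableOn_exp_neg_mul_rpow' (one_div_pos.mpr hL) hν₁).const_mul d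
  have hint2 : MeasureTheory.IntegrableOn
      (fun t : ℝ => d * Real.exp (-ν₂ * t ^ (1/p))) (Set.Ioi 0) :=
    (integrableOn_exp_neg_mul_rpow' (one_div_pos.mpr hp) hν₂).const_mul d
  have hval1 : ∫ t in Set.Ioi (0:ℝ), d * Real.exp (-ν₁ * t ^ (1/L)) =
      d * (L * ν₁ ^ (-L) * Real.Gamma L) := by
    rw [MeasureTheory.integral_const_mul, integral_exp_neg_mul_rpow_inv hL hν₁]
  have hval2 : ∫ t in Set.Ioi (0:ℝ), d * Real.exp (-ν₂ * t ^ (1/p)) =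
      d * (p * ν₂ ^ (-p) * Real.Gamma p) := by
    rw [MeasureTheory.integral_const_mul, integral_exp_neg_mul_rpow_inv hp hν₂]
  -- bound the lintegral
  have main : ∫⁻ ω, ENNReal.ofReal (Z ω ^ p) ≤ ENNReal.ofReal (d * R) := by
    rw [layer]
    calc ∫⁻ t in Set.Ioi (0:ℝ), volume {ω | t < Z ω ^ p}
        ≤ ∫⁻ t in Set.Ioi (0:ℝ), (ENNReal.ofReal (d * Real.exp (-ν₁ * t ^ (1/L))) +
            ENNReal.ofReal (d * Real.exp (-ν₂ * t ^ (1/p)))) :=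
          MeasureTheory.setLIntegral_mono (by fun_prop) keybound
      _ = (∫⁻ t in Set.Ioi (0:ℝ), ENNReal.ofReal (d * Real.exp (-ν₁ * t ^ (1/L)))) +
            ∫⁻ t in Set.Ioi (0:ℝ), ENNReal.ofReal (d * Real.exp (-ν₂ * t ^ (1/p))) := by
          exact MeasureTheory.lintegral_add_left (by fun_prop) _
      _ = ENNReal.ofReal (d * (L * ν₁ ^ (-L) * Real.Gamma L)) +
            ENNReal.ofReal (d * (p * ν₂ ^ (-p) * Real.Gamma p)) := by
          rw [← MeasureTheory.ofReal_integral_eq_lintegral_ofReal hint1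
              (Filter.Eventually.of_forall fun t => by positivity),
            ← MeasureTheory.ofReal_integral_eq_lintegral_ofReal hint2
              (Filter.Eventually.of_forall fun t => by positivity),
            hval1, hval2]
      _ = ENNReal.ofReal (d * R) := by
          rw [← ENNReal.ofReal_add (by
              have := Real.Gamma_pos_of_pos hL
              have := Real.rpow_pos_of_pos hν₁ (-L); positivity) (by
              have := Real.Gamma_pos_of_pos hp
              have := Real.rpow_pos_of_pos hν₂ (-p); positivity)]
          congr 1
          rw [hRdef, hpdef]
          ring
  -- from lintegral to integral
  have hInt : (∫ ω, Z ω ^ p) ≤ d * R := by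
    rw [MeasureTheory.integral_eq_lintegral_of_nonneg_ae
      (Filter.Eventually.of_forall fun ω => Real.rpow_nonneg (hpos ω) p)
      hZp_meas.aestronglyMeasurable]
    exact ENNReal.toReal_le_of_le_ofReal (by positivity) main
  have hInt0 : (0:ℝ) ≤ ∫ ω, Z ω ^ p :=
    MeasureTheory.integral_nonneg fun ω => Real.rpow_nonneg (hpos ω) p
  -- conclude
  have step : (∫ ω, Z ω ^ p) ^ (1/p) ≤ (d * R) ^ (1/p) :=
    Real.rpow_le_rpow hInt0 hInt (by positivity)
  have hdr : (d * R) ^ (1/p) = Real.sqrt (Real.exp 1) * R ^ (1/p) := by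
    rw [Real.mul_rpow hd0.le hR.le]
    congr 1
    rw [Real.rpow_def_of_pos hd0, Real.sqrt_eq_rpow, Real.rpow_def_of_pos (Real.exp_pos 1),
      Real.log_exp]
    congr 1
    rw [hpdef, hLdef]
    field_simp
    have hL0 : Real.log d ≠ 0 := hL.ne'
    field_simp
  calc (∫ ω, Z ω ^ p) ^ (1/p) ≤ (d * R) ^ (1/p) := step
    _ = Real.sqrt (Real.exp 1) * R ^ (1/p) := hdr
end
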